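/- Let φ be a Leibniz 2-cocycle on the twisted Schrödinger-Virasoro algebra. Applying the cocycle identity to the triple (Y_{−n}, Y_m, M_n) yields (m+n)·φ(M_{m−n}, M_n) = 0 for all m, n ∈ ℤ. -/

import Mathlib

abbrev B : Type := ℤ ⊕ ℤ ⊕ ℤ
abbrev V : Type := B →₀ ℂ

noncomputable def Lg (n : ℤ) : V := Finsupp.single (Sum.inl n) 1
noncomputable def Yg (n : ℤ) : V := Finsupp.single (Sum.inr (Sum.inl n)) 1
noncomputable def Mg (n : ℤ) : V := Finsupp.single (Sum.inr (Sum.inr n)) 1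

/-- Bracket on basis elements of the twisted Schrödinger–Virasoro algebra. -/
noncomputable def brB : B → B → V
  | Sum.inl n, Sum.inl m => ((m : ℂ) - n) • Lg (n + m)
  | Sum.inl n, Sum.inr (Sum.inl m) => ((m : ℂ) - n / 2) • Yg (n + m)
  | Sum.inl n, Sum.inr (Sum.inr p) => (p : ℂ) • Mg (n + p)
  | Sum.inr (Sum.inl m), Sum.inl n => -(((m : ℂ) - n / 2) • Yg (n + m))
  | Sum.inr (Sum.inr p), Sum.inl n => -((p : ℂ) • Mg (n + p))
  | Sum.inr (Sum.inl m), Sum.inr (Sum.inl m') => ((m' : ℂ) - m) • Mg (m + m')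
  | _, _ => 0

/-- The bilinear extension of the bracket to the whole space. -/
noncomputable def bk : V →ₗ[ℂ] V →ₗ[ℂ] V :=
  Finsupp.lsum ℂ fun a => LinearMap.toSpanSingleton ℂ (V →ₗ[ℂ] V)
    (Finsupp.lsum ℂ fun b => LinearMap.toSpanSingleton ℂ V (brB a b))

/-- `φ` is a Leibniz 2-cocycle on the twisted Schrödinger–Virasoro algebra. -/
def IsLeibnizCocycle (φ : V →ₗ[ℂ] V →ₗ[ℂ] ℂ) : Prop :=
  ∀ x y z : V, φ x (bk y z) = φ (bk x y) z - φ (bk x z) y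

lemma bk_single (a b : B) : bk (Finsupp.single a 1) (Finsupp.single b 1) = brB a b := by
  simp [bk, Finsupp.lsum_single, LinearMap.toSpanSingleton_apply_one]

theorem stmt19 (φ : V →ₗ[ℂ] V →ₗ[ℂ] ℂ) (hco : IsLeibnizCocycle φ) :
    ∀ m n : ℤ, ((m + n : ℤ) : ℂ) * φ (Mg (m - n)) (Mg n) = 0 := by
  intro m n
  have h := hco (Yg (-n)) (Yg m) (Mg n)
  have h1 : bk (Yg m) (Mg n) = 0 := by
    have := bk_single (Sum.inr (Sum.inl m)) (Sum.inr (Sum.inr n))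
    simpa [Yg, Mg, brB] using this
  have h2 : bk (Yg (-n)) (Yg m) = ((m : ℂ) + n) • Mg (m - n) := by
    have := bk_single (Sum.inr (Sum.inl (-n))) (Sum.inr (Sum.inl m))
    simp only [Yg, Mg, brB] at this ⊢
    rw [this]
    ring_nf
    congr 1 <;> push_cast <;> ring_nf
  have h3 : bk (Yg (-n)) (Mg n) = 0 := by
    have := bk_single (Sum.inr (Sum.inl (-n))) (Sum.inr (Sum.inr n))
    simpa [Yg, Mg, brB] using this
  rw [h1, h2, h3] at h
  simp only [map_zero, LinearMap.zero_apply, map_smul, LinearMap.smul_apply,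
    smul_eq_mul, sub_zero] at h
  push_cast
  exact h.symm
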